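/- For empirical models e₁, e₂ on the same measurement scenario and λ ∈ [0,1], the mixture λe₁ + (1−λ)e₂ satisfies NCF(λe₁ + (1−λ)e₂) ≥ λ·NCF(e₁) + (1−λ)·NCF(e₂); equivalently CF is convex: CF(λe₁ + (1−λ)e₂) ≤ λ·CF(e₁) + (1−λ)·CF(e₂). -/
import Mathlib


open MeasureTheory
open scoped ENNReal

/-- The projection from the global outcome space onto the outcomes of a context `C`. -/
def proj {X : Type*} {O : X → Type*} (C : Set X) (g : ∀ x, O x) : ∀ x : C, O x :=
  fun x => g x

/-- The noncontextual fraction. -/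
noncomputable def NCF {G : Type*} [MeasurableSpace G] {I : Type*} (M : Finset I)
    {Gc : I → Type*} [∀ i, MeasurableSpace (Gc i)] (π : ∀ i, G → Gc i)
    (e : ∀ i, Measure (Gc i)) : ℝ≥0∞ :=
  sSup { r | ∃ μ : Measure G, (∀ i ∈ M, μ.map (π i) ≤ e i) ∧ r = μ Set.univ }

lemma NCF_zero_mem {G : Type*} [MeasurableSpace G] {I : Type*} (M : Finset I)
    {Gc : I → Type*} [∀ i, MeasurableSpace (Gc i)] (π : ∀ i, G → Gc i)
    (e : ∀ i, Measure (Gc i)) :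
    (0 : ℝ≥0∞) ∈ { r | ∃ μ : Measure G, (∀ i ∈ M, μ.map (π i) ≤ e i) ∧ r = μ Set.univ } :=
  ⟨0, fun i _ => by simp only [Measure.map_zero]; exact Measure.zero_le _, by simp⟩

theorem ncf_mix_ge {X : Type*} [Fintype X] {O : X → Type*}
    [∀ x, MeasurableSpace (O x)] (M : Finset (Set X))
    (e₁ e₂ : ∀ C : Set X, Measure (∀ x : C, O x))
    (he₁ : ∀ C ∈ M, IsProbabilityMeasure (e₁ C))
    (he₂ : ∀ C ∈ M, IsProbabilityMeasure (e₂ C))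
    (lam : ℝ≥0∞) (hlam : lam ≤ 1) :
    NCF M (fun C : Set X => proj C (O := O))
        (fun C => lam • e₁ C + (1 - lam) • e₂ C) ≥
      lam * NCF M (fun C : Set X => proj C (O := O)) e₁ +
        (1 - lam) * NCF M (fun C : Set X => proj C (O := O)) e₂ := by
  classical
  set π : ∀ C : Set X, (∀ x, O x) → (∀ x : C, O x) := fun C => proj C (O := O) with hπdef
  have hπ : ∀ C : Set X, Measurable (π C) := fun C =>
    measurable_pi_lambda _ fun x => measurable_pi_apply _
  set S₁ := { r | ∃ μ : Measure (∀ x, O x), (∀ i ∈ M, μ.map (π i) ≤ e₁ i) ∧ r = μ Set.univ }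
  set S₂ := { r | ∃ μ : Measure (∀ x, O x), (∀ i ∈ M, μ.map (π i) ≤ e₂ i) ∧ r = μ Set.univ }
  haveI hne₁ : Nonempty S₁ := ⟨⟨0, NCF_zero_mem M π e₁⟩⟩
  haveI hne₂ : Nonempty S₂ := ⟨⟨0, NCF_zero_mem M π e₂⟩⟩
  have key : ∀ r₁ ∈ S₁, ∀ r₂ ∈ S₂,
      lam * r₁ + (1 - lam) * r₂ ≤
        NCF M π (fun C => lam • e₁ C + (1 - lam) • e₂ C) := by
    rintro r₁ ⟨μ₁, h₁, rfl⟩ r₂ ⟨μ₂, h₂, rfl⟩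
    apply le_sSup
    refine ⟨lam • μ₁ + (1 - lam) • μ₂, fun i hi => ?_, by simp⟩
    rw [Measure.map_add _ _ (hπ i), Measure.map_smul, Measure.map_smul]
    intro s
    simp only [Measure.coe_add, Measure.coe_smul, Pi.add_apply, Pi.smul_apply,
      smul_eq_mul]
    exact add_le_add (mul_le_mul_right (h₁ i hi s) _) (mul_le_mul_right (h₂ i hi s) _)
  have heq : lam * sSup S₁ + (1 - lam) * sSup S₂
      = ⨆ r₁ : S₁, ⨆ r₂ : S₂, (lam * r₁ + (1 - lam) * r₂) := by
    rw [sSup_eq_iSup', sSup_eq_iSup', ENNReal.mul_iSup, ENNReal.mul_iSup,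
      ENNReal.iSup_add]
    refine iSup_congr fun r₁ => ?_
    rw [ENNReal.add_iSup]
  show lam * sSup S₁ + (1 - lam) * sSup S₂ ≤ _
  rw [heq]
  exact iSup₂_le fun r₁ r₂ => key r₁ r₁.2 r₂ r₂.2
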